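/- Let V : [0,T) → ℝ be continuously differentiable with V(0) > 0 and V'(t) ≥ (c/2)(t+s)⁻¹ V(t)² for all t ∈ [0,T), where c > 0 and s > 0. Then V(t) > 0 and V(t) ≥ 2V(0)/(2 - cV(0)·log((t+s)/s)) for all t ∈ [0,T) with 2 - cV(0)·log((t+s)/s) > 0; moreover T ≤ s·exp(2/(cV(0))) - s. -/

import Mathlib

/-- Riccati differential inequality `V' ≥ (c/2)(t+s)⁻¹ V²`: lower bound and
bound on the existence time. -/
theorem stmt_6 (V V' : ℝ → ℝ) (T c s : ℝ) (hc : 0 < c) (hs : 0 < s) (hT : 0 < T)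
    (hderiv : ∀ t ∈ Set.Ico (0 : ℝ) T, HasDerivAt V (V' t) t)
    (hcont : ContinuousOn V' (Set.Ico 0 T))
    (hV0 : 0 < V 0)
    (hineq : ∀ t ∈ Set.Ico (0 : ℝ) T, V' t ≥ (c / 2) * (t + s)⁻¹ * (V t) ^ 2) :
    (∀ t ∈ Set.Ico (0 : ℝ) T,
      0 < V t ∧
      (0 < 2 - c * V 0 * Real.log ((t + s) / s) →
        V t ≥ 2 * V 0 / (2 - c * V 0 * Real.log ((t + s) / s)))) ∧
    T ≤ s * Real.exp (2 / (c * V 0)) - s := by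
  have hIoo : Set.Ioo (0:ℝ) T ⊆ Set.Ico 0 T := Set.Ioo_subset_Ico_self
  have hint : interior (Set.Ico (0:ℝ) T) = Set.Ioo 0 T := interior_Ico
  -- V is monotone on [0, T)
  have hmono : MonotoneOn V (Set.Ico 0 T) := by
    apply monotoneOn_of_hasDerivWithinAt_nonneg (f' := V') (convex_Ico 0 T)
    · exact fun x hx => (hderiv x hx).continuousAt.continuousWithinAt
    · intro x hx
      rw [hint] at hx
      exact (hderiv x (hIoo hx)).hasDerivWithinAt
    · intro x hx
      rw [hint] at hx
      have h1 := hineq x (hIoo hx)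
      have hxs : 0 < x + s := by linarith [hx.1]
      have : (0:ℝ) ≤ c / 2 * (x + s)⁻¹ * V x ^ 2 := by positivity
      linarith
  have hpos : ∀ t ∈ Set.Ico (0:ℝ) T, 0 < V t := by
    intro t ht
    exact lt_of_lt_of_le hV0 (hmono ⟨le_refl 0, hT⟩ ht ht.1)
  -- W = 1/V + (c/2) log (x+s) is antitone
  set W : ℝ → ℝ := fun x => (V x)⁻¹ + c / 2 * Real.log (x + s) with hW
  have hWded : ∀ x ∈ Set.Ico (0:ℝ) T,
      HasDerivAt W (-(V' x) / (V x) ^ 2 + c / 2 * (1 / (x + s))) x := by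
    intro x hx
    have hxs : (0:ℝ) < x + s := by linarith [hx.1]
    have h1 : HasDerivAt (fun y : ℝ => (V y)⁻¹) (-(V' x) / (V x) ^ 2) x :=
      (hderiv x hx).inv (ne_of_gt (hpos x hx))
    have h2 : HasDerivAt (fun y : ℝ => Real.log (y + s)) (1 / (x + s)) x := by
      have := ((hasDerivAt_id x).add_const s).log (ne_of_gt hxs)
      simpa using this
    exact h1.add (h2.const_mul (c / 2))
  have hanti : AntitoneOn W (Set.Ico 0 T) := by
    apply antitoneOn_of_hasDerivWithinAt_nonpos
      (f' := fun x => -(V' x) / (V x) ^ 2 + c / 2 * (1 / (x + s))) (convex_Ico 0 T)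
    · exact fun x hx => (hWded x hx).continuousAt.continuousWithinAt
    · intro x hx
      rw [hint] at hx
      exact (hWded x (hIoo hx)).hasDerivWithinAt
    · intro x hx
      rw [hint] at hx
      have h1 := hineq x (hIoo hx)
      have hxs : (0:ℝ) < x + s := by linarith [hx.1]
      have hv2 : (0:ℝ) < (V x) ^ 2 := pow_pos (hpos x (hIoo hx)) 2
      have key : c / 2 * (1 / (x + s)) ≤ V' x / (V x) ^ 2 := by
        rw [le_div_iff₀ hv2]
        calc c / 2 * (1 / (x + s)) * V x ^ 2 = c / 2 * (x + s)⁻¹ * V x ^ 2 := by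
              rw [one_div]
          _ ≤ V' x := h1
      have : -(V' x) / (V x) ^ 2 = -(V' x / (V x) ^ 2) := by ring
      rw [this]
      linarith
  -- key bound on 1/V
  have hbound : ∀ t ∈ Set.Ico (0:ℝ) T,
      (V t)⁻¹ ≤ (V 0)⁻¹ - c / 2 * Real.log ((t + s) / s) := by
    intro t ht
    have h := hanti ⟨le_refl 0, hT⟩ ht ht.1
    have hts : (0:ℝ) < t + s := by linarith [ht.1]
    rw [Real.log_div (ne_of_gt hts) (ne_of_gt hs)]
    simp only [hW, zero_add] at h
    linarith
  constructor
  · intro t ht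
    refine ⟨hpos t ht, fun hD => ?_⟩
    set L := Real.log ((t + s) / s) with hL
    have hb := hbound t ht
    have hVt := hpos t ht
    rw [ge_iff_le, div_le_iff₀ hD]
    have step := mul_le_mul_of_nonneg_left hb
      (show (0:ℝ) ≤ 2 * V 0 * V t by positivity)
    have e1 : 2 * V 0 * V t * (V t)⁻¹ = 2 * V 0 := by
      field_simp
    have e2 : 2 * V 0 * V t * ((V 0)⁻¹ - c / 2 * L) = 2 * V t - c * V 0 * V t * L := by
      field_simp
    rw [e1, e2] at step
    nlinarith [step]
  · by_contra h
    push_neg at h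
    set t0 : ℝ := s * Real.exp (2 / (c * V 0)) - s with ht0def
    have hexp : (1:ℝ) ≤ Real.exp (2 / (c * V 0)) := by
      apply Real.one_le_exp
      positivity
    have h0 : 0 ≤ t0 := by
      rw [ht0def]
      nlinarith
    have ht0 : t0 ∈ Set.Ico (0:ℝ) T := ⟨h0, h⟩
    have hb := hbound t0 ht0
    have hdiv : (t0 + s) / s = Real.exp (2 / (c * V 0)) := by
      rw [ht0def]
      field_simp
      ring
    rw [hdiv, Real.log_exp] at hb
    have hc2 : c / 2 * (2 / (c * V 0)) = (V 0)⁻¹ := by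
      field_simp
    rw [hc2] at hb
    have : 0 < (V t0)⁻¹ := inv_pos.mpr (hpos t0 ht0)
    linarith
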